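/- If Λ₀ < 1 (low-TFP case, θ < 1/α), then the threshold (1/Λ₀)·[c/(θA(1-α))]^{1/α} is strictly greater than [c/(θA(1-α))]^{1/α}; hence there is a nonempty open interval of population densities l̄ for which r(1) > c > r(0), where r(t) = θ(1-α)A l̄^α (Λ₀/(1+(Λ₀-1)t))^α. On this interval both no enclosure and full enclosure are Nash equilibria of the aggregative enclosure game. -/
import Mathlib


open Real Set

theorem stmt9 (α θ A c : ℝ) (hα : α ∈ Ioo (0:ℝ) 1) (hθ : 0 < θ) (hθα : θ < 1/α)
    (hA : 0 < A) (hc : 0 < c)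
    (Λ : ℝ) (hΛ : Λ = (α * θ) ^ ((1:ℝ)/(1-α))) :
    (c / (θ * A * (1-α))) ^ ((1:ℝ)/α) <
      (1/Λ) * (c / (θ * A * (1-α))) ^ ((1:ℝ)/α) ∧
    ∀ lb ∈ Ioo ((c / (θ * A * (1-α))) ^ ((1:ℝ)/α))
        ((1/Λ) * (c / (θ * A * (1-α))) ^ ((1:ℝ)/α)),
      θ * (1-α) * A * lb ^ α * (Λ / (1 + (Λ - 1) * 1)) ^ α > c ∧
      c > θ * (1-α) * A * lb ^ α * (Λ / (1 + (Λ - 1) * 0)) ^ α := by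
  obtain ⟨hα0, hα1⟩ := hα
  have h1α : 0 < 1 - α := by linarith
  have hK : 0 < θ * A * (1-α) := by positivity
  have hx : 0 < c / (θ * A * (1-α)) := by positivity
  set B := (c / (θ * A * (1-α))) ^ ((1:ℝ)/α) with hB
  have hBpos : 0 < B := rpow_pos_of_pos hx _
  have hBα : B ^ α = c / (θ * A * (1-α)) := by
    rw [hB, one_div, Real.rpow_inv_rpow hx.le (ne_of_gt hα0)]
  have hαθ1 : α * θ < 1 := by
    have := (lt_div_iff₀ hα0).mp hθα
    linarith [mul_comm α θ]
  have hΛpos : 0 < Λ := by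
    rw [hΛ]; exact rpow_pos_of_pos (by positivity) _
  have hΛ1 : Λ < 1 := by
    rw [hΛ]
    exact rpow_lt_one (by positivity) hαθ1 (by positivity)
  have h1Λ : 1 < 1/Λ := by rw [lt_div_iff₀ hΛpos]; linarith
  have hfirst : B < (1/Λ) * B := by
    nlinarith [mul_lt_mul_of_pos_right h1Λ hBpos]
  refine ⟨hfirst, ?_⟩
  rintro lb ⟨hlb1, hlb2⟩
  have hlbpos : 0 < lb := hBpos.trans hlb1
  constructor
  · have h1 : (1:ℝ) + (Λ - 1) * 1 = Λ := by ring
    rw [h1, div_self (ne_of_gt hΛpos), Real.one_rpow, mul_one]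
    have : B ^ α < lb ^ α := rpow_lt_rpow hBpos.le hlb1 hα0
    rw [hBα] at this
    calc c = (θ * A * (1-α)) * (c / (θ * A * (1-α))) := by field_simp
    _ < (θ * A * (1-α)) * lb ^ α := by exact (mul_lt_mul_iff_right₀ hK).mpr this
    _ = θ * (1-α) * A * lb ^ α := by ring
  · have h0 : (1:ℝ) + (Λ - 1) * 0 = 1 := by ring
    rw [h0, div_one]
    have hlbΛ : lb * Λ < B := by
      have heq : (1/Λ * B) * Λ = B := by field_simp
      nlinarith [mul_lt_mul_of_pos_right hlb2 hΛpos]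
    have h2 : (lb * Λ) ^ α < B ^ α := rpow_lt_rpow (by positivity) hlbΛ hα0
    rw [Real.mul_rpow hlbpos.le hΛpos.le, hBα] at h2
    calc θ * (1-α) * A * lb ^ α * Λ ^ α = (θ * A * (1-α)) * (lb ^ α * Λ ^ α) := by ring
    _ < (θ * A * (1-α)) * (c / (θ * A * (1-α))) := (mul_lt_mul_iff_right₀ hK).mpr h2
    _ = c := by field_simp
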